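/- arXiv:1504.06822 — 2 statements merged into one kernel-verified Lean document; each statement's English description precedes it below -/
import Mathlib

section
/- Assume (A1). Then there exist constants 0 < C₅, C₆ < ∞ such that for all η > 0 and all x ∈ Z^d, ℙ( sup{ d(x,y) : y ∈ Z^d, ‖x−y‖₁ < η‖x‖₁ } ≥ C₅ η ‖x‖₁ ) ≤ e^{−C₆ η ‖x‖₁}, where d(x,y) := max(a(x,y), a(y,x)). -/
open MeasureTheory ProbabilityTheory Filter Set
open scoped ENNReal NNReal BigOperators Topology

namespace RWRP

/-- Sites of the lattice `ℤ^d`. -/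
abbrev Site (d : ℕ) := Fin d → ℤ

variable {d : ℕ}

/-- ℓ¹ distance between two sites, as a natural number. -/
def dist1 (u v : Site d) : ℕ := ∑ i, (u i - v i).natAbs

/-- ℓ¹ norm of a site, as a real number. -/
noncomputable def norm1 (x : Site d) : ℝ := ∑ i, |(x i : ℝ)|

/-- ℓ^∞ norm of a site, as a real number. -/
noncomputable def norminf (x : Site d) : ℝ :=
  ((Finset.univ.sup fun i => (x i).natAbs : ℕ) : ℝ)

/-- A nearest-neighbour path on `ℤ^d`, encoded as the list of its successive positions. -/
def IsNNPath (r : List (Site d)) : Prop := r.Chain' fun u v => dist1 u v = 1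

/-- `AdmissiblePath V x y r` : `r` is a nearest-neighbour path from `x` to `y` which stays
in `V` and visits `y` exactly at its final point.  Such paths are in natural bijection with
the trajectories of the simple random walk started at `x` and stopped at the hitting time
`H(y)`, restricted to the event `{H(y) < T_V}`. -/
def AdmissiblePath (V : Set (Site d)) (x y : Site d) (r : List (Site d)) : Prop :=
  IsNNPath r ∧ r.head? = some x ∧ r.getLast? = some y ∧
    (∀ z ∈ r.dropLast, z ≠ y) ∧ ∀ z ∈ r, z ∈ V

/-- The weight of a path `r` for the simple random walk in the potential `ω` :
`(2d)^{-(|r|-1)} exp(-∑_{k<|r|-1} ω(r_k))`.  The weight of `r` is exactly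
`E^x[exp(-∑_{k=0}^{H(y)-1} ω(S_k)) ; (S_0, …, S_{H(y)}) = r]`. -/
noncomputable def pathWeight (ω : Site d → ℝ) (r : List (Site d)) : ℝ≥0∞ :=
  (2 * (d : ℝ≥0∞))⁻¹ ^ (r.length - 1) *
    ENNReal.ofReal (Real.exp (-((r.dropLast.map ω).sum)))

/-- `eCostE ω V x y = E^x[exp(-∑_{k=0}^{H(y)-1} ω(S_k)) 1_{H(y) < T_V}]`, as an
extended nonnegative real. -/
noncomputable def eCostE (ω : Site d → ℝ) (V : Set (Site d)) (x y : Site d) : ℝ≥0∞ :=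
  ∑' r : {r : List (Site d) // AdmissiblePath V x y r}, pathWeight ω r

/-- `eCost ω V x y = E^x[exp(-∑_{k=0}^{H(y)-1} ω(S_k)) 1_{H(y) < T_V}]`, as a real number. -/
noncomputable def eCost (ω : Site d → ℝ) (V : Set (Site d)) (x y : Site d) : ℝ :=
  (eCostE ω V x y).toReal

/-- The travel cost `a_V(x,y,ω) = -log e_V(x,y,ω)`, real-valued. -/
noncomputable def aCost (ω : Site d → ℝ) (V : Set (Site d)) (x y : Site d) : ℝ :=
  -Real.log (eCost ω V x y)

/-- The travel cost `a_V(x,y,ω) = -log e_V(x,y,ω)` with values in `[0,∞]`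
(it equals `∞` when `e_V(x,y,ω) = 0`, i.e. when no admissible path exists). -/
noncomputable def aCostE (ω : Site d → ℝ) (V : Set (Site d)) (x y : Site d) : ℝ≥0∞ :=
  if eCostE ω V x y = 0 then ⊤ else ENNReal.ofReal (aCost ω V x y)

/-- The total weight of the admissible paths from `0` to `x` (in the whole lattice)
satisfying the additional condition `p`; equals
`E^0[exp(-∑_{k=0}^{H(x)-1} ω(S_k)) 1_{H(x)<∞} 1_{p}]`. -/
noncomputable def qMass (ω : Site d → ℝ) (x : Site d) (p : List (Site d) → Prop) : ℝ≥0∞ :=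
  ∑' r : {r : List (Site d) // AdmissiblePath Set.univ 0 x r ∧ p r}, pathWeight ω r

/-- `qProb ω x p = Q_ω^{0,x}(p)`, the probability, under the weighted path measure
`Q_ω^{0,x}`, that the walk stopped at `H(x)` satisfies `p`. -/
noncomputable def qProb (ω : Site d → ℝ) (x : Site d) (p : List (Site d) → Prop) : ℝ :=
  ((eCostE ω Set.univ 0 x)⁻¹ * qMass ω x p).toReal

/-- The number of distinct sites visited by the walk strictly before the end of the
path `r`, i.e. `#A` with `A = {S_k ; 0 ≤ k < H(x)}`. -/
noncomputable def rangeSize (r : List (Site d)) : ℕ := r.dropLast.toFinset.card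

/-- `qIntegral ω x f = Ê_ω^{0,x}[f]`, the expectation of the path functional `f` under the
weighted path measure `Q_ω^{0,x}`. -/
noncomputable def qIntegral (ω : Site d → ℝ) (x : Site d) (f : List (Site d) → ℝ≥0∞) : ℝ :=
  ((eCostE ω Set.univ 0 x)⁻¹ *
    ∑' r : {r : List (Site d) // AdmissiblePath Set.univ 0 x r}, pathWeight ω r.1 * f r.1).toReal

/-- `qRange ω x = Ê_ω^{0,x}[#A]`, the mean size of the range of the walk before hitting `x`
under the weighted path measure. -/
noncomputable def qRange (ω : Site d → ℝ) (x : Site d) : ℝ :=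
  qIntegral ω x fun r => (rangeSize r : ℝ≥0∞)

/-- A path realizing the first return of the walk to the origin. -/
def ReturnPath (r : List (Site d)) : Prop :=
  IsNNPath r ∧ r.head? = some 0 ∧ r.getLast? = some 0 ∧ 2 ≤ r.length ∧
    ∀ z ∈ r.dropLast.tail, z ≠ (0 : Site d)

/-- `returnProb d = P^0(H₂(0) < ∞)`, the probability that the simple random walk on `ℤ^d`
returns to its starting point. -/
noncomputable def returnProb (d : ℕ) : ℝ :=
  (∑' r : {r : List (Site d) // ReturnPath r}, pathWeight (fun _ : Site d => (0 : ℝ)) r.1).toReal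

/-- The cube `[-C‖x‖₁, C‖x‖₁]^d ∩ ℤ^d`. -/
def box (x : Site d) (C : ℝ) : Set (Site d) := {z | ∀ i, |((z i : ℤ) : ℝ)| ≤ C * norm1 x}

/-- The truncated potential `ω̂ = ω ∧ (4d/γ) log ‖x‖₁`. -/
noncomputable def trunc (γ : ℝ) (x : Site d) (ω : Site d → ℝ) : Site d → ℝ :=
  fun z => min (ω z) (4 * d / γ * Real.log (norm1 x))

/-- The entropy `Ent(X) = E[X log X] - E[X] log E[X]` of a random variable under `μ`. -/
noncomputable def entropy {Ω : Type*} [MeasurableSpace Ω] (μ : Measure Ω) (X : Ω → ℝ) : ℝ :=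
  (∫ ω, X ω * Real.log (X ω) ∂μ) - (∫ ω, X ω ∂μ) * Real.log (∫ ω, X ω ∂μ)



/-! ### Auxiliary lemmas for the proof of the maximal lemma -/

lemma dist1_eq_zero_iff {x y : Site d} : dist1 x y = 0 ↔ x = y := by
  constructor
  · intro h
    funext i
    have := Finset.sum_eq_zero_iff.mp h i (Finset.mem_univ i)
    omega
  · rintro rfl; simp [dist1]

lemma dist1_symm (x y : Site d) : dist1 x y = dist1 y x := by
  unfold dist1; congr 1; funext i; omega

lemma natAbs_le_dist1 (x y : Site d) (i : Fin d) : (x i - y i).natAbs ≤ dist1 x y := by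
  unfold dist1
  exact Finset.single_le_sum (f := fun j => (x j - y j).natAbs)
    (fun j _ => Nat.zero_le _) (Finset.mem_univ i)

noncomputable def stepToward (x y : Site d) : Site d :=
  if h : ∃ i, x i ≠ y i then
    Function.update x h.choose (if x h.choose < y h.choose then x h.choose + 1 else x h.choose - 1)
  else x

lemma dist1_update (x v : Site d) (i : Fin d) (a : ℤ) :
    dist1 (Function.update x i a) v
      = (a - v i).natAbs + ∑ j ∈ Finset.univ \ {i}, (x j - v j).natAbs := by
  have h : ∀ j, ((Function.update x i a) j - v j).natAbs
      = Function.update (fun j => (x j - v j).natAbs) i ((a - v i).natAbs) j := by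
    intro j
    by_cases hj : j = i
    · subst hj; simp
    · simp [Function.update_of_ne hj]
  unfold dist1
  rw [Finset.sum_congr rfl fun j _ => h j, Finset.sum_update_of_mem (Finset.mem_univ i)]

lemma dist1_step (x y : Site d) (h : x ≠ y) :
    dist1 x (stepToward x y) = 1 ∧ dist1 (stepToward x y) y + 1 = dist1 x y := by
  have hex : ∃ i, x i ≠ y i := by
    by_contra hc
    push_neg at hc
    exact h (funext hc)
  set i := hex.choose with hi
  have hxy : x i ≠ y i := hex.choose_spec
  set a : ℤ := if x i < y i then x i + 1 else x i - 1 with ha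
  have hst : stepToward x y = Function.update x i a := by
    rw [stepToward, dif_pos hex]
  constructor
  · rw [hst, dist1_symm, dist1_update]
    have h1 : (a - x i).natAbs = 1 := by
      rw [ha]; split <;> omega
    have h2 : ∑ j ∈ Finset.univ \ {i}, (x j - x j).natAbs = 0 := by
      apply Finset.sum_eq_zero; intro j _; omega
    omega
  · rw [hst, dist1_update]
    have hx : dist1 x y = (x i - y i).natAbs + ∑ j ∈ Finset.univ \ {i}, (x j - y j).natAbs := by
      have := dist1_update x y i (x i)
      rwa [Function.update_eq_self] at this
    have h1 : (a - y i).natAbs + 1 = (x i - y i).natAbs := by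
      rw [ha]; split <;> omega
    omega

noncomputable def pathTo (x y : Site d) : List (Site d) :=
  if h : dist1 x y = 0 then [x]
  else x :: pathTo (stepToward x y) y
termination_by dist1 x y
decreasing_by
  have hne : x ≠ y := fun he => h (dist1_eq_zero_iff.mpr he)
  have := (dist1_step x y hne).2
  omega

lemma pathTo_spec_aux : ∀ (n : ℕ) (x y : Site d), dist1 x y = n →
    AdmissiblePath Set.univ x y (pathTo x y) ∧ (pathTo x y).length = n + 1 ∧
    (pathTo x y).Nodup ∧ ∀ z ∈ pathTo x y, dist1 z y ≤ n := by
  intro n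
  induction n using Nat.strong_induction_on with
  | _ n ih =>
    intro x y hn
    rw [pathTo]
    by_cases h : dist1 x y = 0
    · have hxy : x = y := dist1_eq_zero_iff.mp h
      subst hxy
      rw [dif_pos h]
      refine ⟨⟨List.isChain_singleton _, rfl, rfl, by simp, by simp⟩, by simp; omega,
        List.nodup_singleton _, ?_⟩
      intro z hz
      simp at hz
      subst hz
      exact hn.le
    · rw [dif_neg h]
      have hne : x ≠ y := fun he => h (dist1_eq_zero_iff.mpr he)
      obtain ⟨hs1, hs2⟩ := dist1_step x y hne
      set x' := stepToward x y
      have hlt : dist1 x' y < n := by omega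
      obtain ⟨⟨hnn, hhd, hlast, hnotY, _⟩, hlen, hnd, hdist⟩ := ih (dist1 x' y) (by omega) x' y rfl
      have hne' : pathTo x' y ≠ [] := by
        intro hc; rw [hc] at hlen; simp at hlen
      obtain ⟨a, l, hal⟩ := List.exists_cons_of_ne_nil hne'
      have hha : a = x' := by rw [hal] at hhd; simpa using hhd
      refine ⟨⟨?_, rfl, ?_, ?_, by simp⟩, by simp [hlen]; omega, ?_, ?_⟩
      · refine List.isChain_cons.mpr ⟨?_, hnn⟩
        intro b hb
        rw [hhd] at hb
        simp at hb
        subst hb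
        exact hs1
      · rw [hal, List.getLast?_cons_cons]
        rw [hal] at hlast
        exact hlast
      · rw [hal, List.dropLast_cons₂]
        intro z hz
        rcases List.mem_cons.mp hz with rfl | hz'
        · exact hne
        · rw [hal] at hnotY
          exact hnotY z hz'
      · rw [List.nodup_cons]
        refine ⟨fun hc => ?_, hnd⟩
        have := hdist x hc
        omega
      · intro z hz
        rcases List.mem_cons.mp hz with rfl | hz'
        · omega
        · have := hdist z hz'
          omega

lemma pathTo_spec (x y : Site d) :
    AdmissiblePath Set.univ x y (pathTo x y) ∧ (pathTo x y).length = dist1 x y + 1 ∧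
    (pathTo x y).Nodup ∧ ∀ z ∈ pathTo x y, dist1 z y ≤ dist1 x y :=
  pathTo_spec_aux (dist1 x y) x y rfl

lemma admissible_self {V : Set (Site d)} {x : Site d} (hx : x ∈ V) (r : List (Site d)) :
    AdmissiblePath V x x r ↔ r = [x] := by
  constructor
  · rintro ⟨-, hhd, -, hnotY, -⟩
    match r with
    | [] =>
      simp at hhd
    | [a] =>
      simp at hhd
      rw [hhd]
    | a :: b :: l =>
      simp at hhd
      subst hhd
      exact absurd rfl (hnotY a (by simp))
  · rintro rfl
    exact ⟨List.isChain_singleton _, rfl, rfl, by simp, by simpa using hx⟩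

lemma eCostE_self {V : Set (Site d)} {x : Site d} {ω : Site d → ℝ} (hx : x ∈ V) :
    eCostE ω V x x = 1 := by
  unfold eCostE
  have hadm : AdmissiblePath V x x ([x]) := (admissible_self hx ([x])).mpr rfl
  rw [tsum_eq_single (⟨[x], hadm⟩ : {r : List (Site d) // AdmissiblePath V x x r})]
  · simp [pathWeight]
  · intro b hb
    exact absurd (Subtype.ext ((admissible_self hx b.1).mp b.2)) hb

lemma aCost_self {V : Set (Site d)} {x : Site d} (hx : x ∈ V) (ω : Site d → ℝ) :
    aCost ω V x x = 0 := by
  unfold aCost eCost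
  rw [eCostE_self hx]
  simp

lemma aCost_le (hd : 2 ≤ d) (ω : Site d → ℝ) (hω : ∀ z, 0 ≤ ω z) (x y : Site d) :
    aCost ω Set.univ x y ≤
      (dist1 x y : ℝ) * Real.log (2*d) + ∑ z ∈ (pathTo x y).toFinset, ω z := by
  obtain ⟨hadm, hlen, hnd, -⟩ := pathTo_spec x y
  set r := pathTo x y
  set L := dist1 x y
  set S := ((r.dropLast.map ω).sum) with hS
  set T := ∑ z ∈ r.toFinset, ω z with hT
  have hd0 : (0:ℝ) < 2 * d := by positivity
  have hdr : (2:ℝ) ≤ (d:ℝ) := by exact_mod_cast hd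
  have hlog : 0 ≤ Real.log (2*d) := Real.log_nonneg (by linarith)
  have hS0 : 0 ≤ S := List.sum_nonneg (by
    intro a ha
    obtain ⟨z, -, rfl⟩ := List.mem_map.mp ha
    exact hω z)
  have hST : S ≤ T := by
    have hnd' : r.dropLast.Nodup := hnd.sublist (List.dropLast_sublist r)
    have : S = ∑ z ∈ r.dropLast.toFinset, ω z := by
      rw [hS, List.sum_toFinset _ hnd']
    rw [this, hT]
    apply Finset.sum_le_sum_of_subset_of_nonneg
    · intro z hz
      simp only [List.mem_toFinset] at hz ⊢
      exact List.dropLast_sublist r |>.mem hz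
    · intro z _ _; exact hω z
  set w : ℝ := (2*(d:ℝ))⁻¹ ^ L * Real.exp (-S) with hw
  have hw0 : 0 < w := by positivity
  have hweight : pathWeight ω r = ENNReal.ofReal w := by
    unfold pathWeight
    rw [hlen]
    have h2d' : (2 * (d : ℝ≥0∞)) = ENNReal.ofReal (2*(d:ℝ)) := by
      rw [ENNReal.ofReal_mul (by norm_num)]
      norm_num [ENNReal.ofReal_natCast]
    have h2d : (2 * (d : ℝ≥0∞))⁻¹ = ENNReal.ofReal (2*(d:ℝ))⁻¹ := by
      rw [h2d', ← ENNReal.ofReal_inv_of_pos hd0]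
    rw [h2d, ← ENNReal.ofReal_pow (by positivity), ← ENNReal.ofReal_mul (by positivity)]
    simp only [Nat.add_sub_cancel]
    rfl
  have hle : ENNReal.ofReal w ≤ eCostE ω Set.univ x y := by
    rw [← hweight]
    exact ENNReal.le_tsum (⟨r, hadm⟩ : {r : List (Site d) // AdmissiblePath Set.univ x y r})
  have hlogw : -Real.log w = (L:ℝ) * Real.log (2*d) + S := by
    rw [hw, Real.log_mul (by positivity) (Real.exp_ne_zero _), Real.log_pow, Real.log_inv,
      Real.log_exp]
    push_cast
    ring
  have hT0 : 0 ≤ T := Finset.sum_nonneg fun z _ => hω z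
  have hRHS : (0:ℝ) ≤ (L:ℝ) * Real.log (2*d) + T :=
    add_nonneg (mul_nonneg (Nat.cast_nonneg _) hlog) hT0
  by_cases htop : eCostE ω Set.univ x y = ⊤
  · unfold aCost eCost
    rw [htop]
    simpa using hRHS
  · have hwle : w ≤ eCost ω Set.univ x y := by
      have := ENNReal.toReal_mono htop hle
      rwa [ENNReal.toReal_ofReal hw0.le] at this
    have hmain : aCost ω Set.univ x y ≤ -Real.log w := by
      unfold aCost
      exact neg_le_neg (Real.log_le_log hw0 hwle)
    calc aCost ω Set.univ x y ≤ -Real.log w := hmain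
      _ = (L:ℝ) * Real.log (2*d) + S := hlogw
      _ ≤ (L:ℝ) * Real.log (2*d) + T := by linarith

lemma chernoff (μ : Measure ((Site d) → ℝ)) [IsProbabilityMeasure μ]
    (hindep : iIndepFun (fun z : Site d => fun ω => ω z) μ)
    (hident : ∀ z : Site d, IdentDistrib (fun ω => ω z) (fun ω => ω 0) μ μ)
    (γ : ℝ) (hγ : 0 < γ)
    (hA1 : Integrable (fun ω => Real.exp (γ * ω 0)) μ)
    (P : Finset (Site d)) (s : ℝ) :
    μ {ω | s ≤ ∑ z ∈ P, ω z} ≤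
      ENNReal.ofReal (Real.exp (-γ * s) * (∫ ω, Real.exp (γ * ω 0) ∂μ) ^ P.card) := by
  set M : ℝ := ∫ ω, Real.exp (γ * ω 0) ∂μ with hM
  have hexp : Measurable (fun u : ℝ => Real.exp (γ * u)) := (measurable_id.const_mul γ).exp
  have hid : ∀ z : Site d, IdentDistrib (fun ω : (Site d) → ℝ => Real.exp (γ * ω z))
      (fun ω => Real.exp (γ * ω 0)) μ μ := fun z => (hident z).comp hexp
  have hint : ∀ z : Site d, Integrable (fun ω : (Site d) → ℝ => Real.exp (γ * ω z)) μ :=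
    fun z => (hid z).integrable_iff.mpr hA1
  have hmeas : ∀ z : Site d, Measurable (fun ω : (Site d) → ℝ => ω z) :=
    fun z => measurable_pi_apply z
  set X : Site d → ((Site d) → ℝ) → ℝ := fun z ω => ω z with hX
  have hintsum : Integrable (fun ω => Real.exp (γ * (∑ z ∈ P, X z) ω)) μ :=
    hindep.integrable_exp_mul_sum hmeas (fun z _ => hint z)
  have hmgf : mgf (∑ z ∈ P, X z) μ γ = M ^ P.card := by
    rw [iIndepFun.mgf_sum hindep hmeas P]
    rw [Finset.prod_congr rfl (fun z _ => ?_), Finset.prod_const]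
    show mgf (X z) μ γ = M
    rw [mgf, hM]
    exact (hid z).integral_eq
  have hch := measure_ge_le_exp_mul_mgf (μ := μ) (X := ∑ z ∈ P, X z) s hγ.le hintsum
  rw [hmgf] at hch
  have hset : {ω : (Site d) → ℝ | s ≤ ∑ z ∈ P, ω z} = {ω | s ≤ (∑ z ∈ P, X z) ω} := by
    ext ω; simp [hX]
  rw [hset]
  rw [← ENNReal.ofReal_toReal (measure_ne_top μ _)]
  exact ENNReal.ofReal_le_ofReal hch

lemma norm1_sub_eq (x y : Site d) : norm1 (x - y) = (dist1 x y : ℝ) := by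
  unfold norm1 dist1
  push_cast
  refine Finset.sum_congr rfl fun i _ => ?_
  rw [Pi.sub_apply, Nat.cast_natAbs]
  push_cast
  rfl

set_option maxHeartbeats 2000000 in
/-- **Lemma 2.4** (maximal lemma).  Under (A1) there are constants `0 < C₅, C₆ < ∞` such
that for all `η > 0` and `x ∈ ℤ^d`,
`ℙ(sup{d(x,y) : ‖x-y‖₁ < η‖x‖₁} ≥ C₅ η ‖x‖₁) ≤ exp(-C₆ η ‖x‖₁)`,
where `d(x,y) = a(x,y) ∨ a(y,x)`. -/
theorem maximal_lemma
    (d : ℕ) (hd : 2 ≤ d) (μ : Measure ((Site d) → ℝ)) [IsProbabilityMeasure μ]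
    (hindep : iIndepFun (fun z : Site d => fun ω => ω z) μ)
    (hident : ∀ z : Site d, IdentDistrib (fun ω => ω z) (fun ω => ω 0) μ μ)
    (hpos : ∀ᵐ ω ∂μ, ∀ z : Site d, 0 ≤ ω z)
    (hnontriv : μ {ω | ω 0 = 0} < 1)
    (γ : ℝ) (hγ : 0 < γ)
    (hA1 : Integrable (fun ω => Real.exp (γ * ω 0)) μ) :
    ∃ C₅ C₆ : ℝ, 0 < C₅ ∧ 0 < C₆ ∧ ∀ η : ℝ, 0 < η → ∀ x : Site d,
      μ {ω | ∃ y : Site d, norm1 (x - y) < η * norm1 x ∧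
            C₅ * η * norm1 x ≤ max (aCost ω Set.univ x y) (aCost ω Set.univ y x)} ≤
        ENNReal.ofReal (Real.exp (-C₆ * η * norm1 x)) := by
  classical
  set M : ℝ := ∫ ω, Real.exp (γ * ω 0) ∂μ with hM
  have hM1 : 1 ≤ M := by
    have hmono : (fun _ : (Site d) → ℝ => (1:ℝ)) ≤ᵐ[μ] fun ω => Real.exp (γ * ω 0) := by
      filter_upwards [hpos] with ω hω
      exact Real.one_le_exp (mul_nonneg hγ.le (hω 0))
    have := integral_mono_ae (integrable_const 1) hA1 hmono
    simpa using this
  have hM0 : 0 < M := lt_of_lt_of_le one_pos hM1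
  have hlogM : 0 ≤ Real.log M := Real.log_nonneg hM1
  have hdr : (2:ℝ) ≤ (d:ℝ) := by exact_mod_cast hd
  have hlog2d : 0 ≤ Real.log (2*(d:ℝ)) := Real.log_nonneg (by linarith)
  set B : ℝ := 3*d + 4*d*Real.log M + 1 with hB
  have hBpos : 0 < B := by
    have h3 : (0:ℝ) ≤ 3*d := by positivity
    have h4 : (0:ℝ) ≤ 4*d*Real.log M := by positivity
    linarith
  set C₅ : ℝ := B/γ + Real.log (2*(d:ℝ)) with hC5
  have hC5pos : 0 < C₅ := add_pos_of_pos_of_nonneg (div_pos hBpos hγ) hlog2d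
  refine ⟨C₅, 1, hC5pos, one_pos, ?_⟩
  intro η hη x
  set N : ℝ := norm1 x with hNdef
  have hNnat : N = ((dist1 x 0 : ℕ) : ℝ) := by
    rw [hNdef, ← norm1_sub_eq x 0, sub_zero]
  by_cases hN0 : N = 0
  · have hempty : {ω : (Site d) → ℝ | ∃ y : Site d, norm1 (x - y) < η * norm1 x ∧
        C₅ * η * norm1 x ≤ max (aCost ω Set.univ x y) (aCost ω Set.univ y x)} = ∅ := by
      ext ω
      simp only [Set.mem_setOf_eq, Set.mem_empty_iff_false, iff_false, not_exists]
      rintro y ⟨h1, -⟩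
      rw [norm1_sub_eq, ← hNdef, hN0, mul_zero] at h1
      exact absurd h1 (not_lt.mpr (Nat.cast_nonneg _))
    rw [hempty]
    simp
  · have hN1 : (1:ℝ) ≤ N := by
      rw [hNnat] at hN0 ⊢
      have : dist1 x 0 ≠ 0 := by
        intro hc; rw [hc] at hN0; simp at hN0
      exact_mod_cast Nat.one_le_iff_ne_zero.mpr this
    set t : ℝ := η * N with ht
    have ht0 : 0 < t := mul_pos hη (by linarith)
    by_cases ht1 : t < 1
    · -- only y = x is possible, and d(x,x) = 0 < C₅ t
      have hempty : {ω : (Site d) → ℝ | ∃ y : Site d, norm1 (x - y) < η * norm1 x ∧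
          C₅ * η * norm1 x ≤ max (aCost ω Set.univ x y) (aCost ω Set.univ y x)} = ∅ := by
        ext ω
        simp only [Set.mem_setOf_eq, Set.mem_empty_iff_false, iff_false, not_exists]
        rintro y ⟨h1, h2⟩
        rw [norm1_sub_eq, ← hNdef] at h1
        have hdxy : dist1 x y = 0 := by
          by_contra hc
          have : (1:ℝ) ≤ (dist1 x y : ℝ) := by
            exact_mod_cast Nat.one_le_iff_ne_zero.mpr hc
          linarith
        have hyx : y = x := (dist1_eq_zero_iff.mp hdxy).symm
        rw [hyx, aCost_self (Set.mem_univ x) ω, max_self] at h2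
        have : 0 < C₅ * η * N := by positivity
        rw [← hNdef] at h2
        nlinarith
      rw [hempty]
      simp
    · push_neg at ht1
      set m : ℕ := ⌊t⌋₊ with hm
      have hm1 : 1 ≤ m := Nat.le_floor (by exact_mod_cast ht1)
      have hmt : (m:ℝ) ≤ t := Nat.floor_le ht0.le
      set Ball : Finset (Site d) := Finset.Icc (fun i => x i - m) (fun i => x i + m) with hBall
      set P : Site d → Finset (Site d) :=
        fun y => (pathTo x y).toFinset ∪ (pathTo y x).toFinset with hP
      set s₀ : ℝ := (B/γ) * t with hs₀
      set G : Set ((Site d) → ℝ) := {ω | ∀ z, 0 ≤ ω z} with hG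
      have hGc : μ Gᶜ = 0 := by
        rw [ae_iff] at hpos
        exact hpos
      set S : Set ((Site d) → ℝ) := {ω | ∃ y : Site d, norm1 (x - y) < η * norm1 x ∧
          C₅ * η * norm1 x ≤ max (aCost ω Set.univ x y) (aCost ω Set.univ y x)} with hSdef
      have hsub : S ∩ G ⊆ ⋃ y ∈ Ball, {ω : (Site d) → ℝ | s₀ ≤ ∑ z ∈ P y, ω z} := by
        rintro ω ⟨⟨y, h1, h2⟩, hg⟩
        simp only [hG, Set.mem_setOf_eq] at hg
        rw [norm1_sub_eq, ← hNdef] at h1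
        have hLt : (dist1 x y : ℝ) < t := h1
        have hLm : dist1 x y ≤ m := Nat.le_floor hLt.le
        have hyB : y ∈ Ball := by
          rw [hBall, Finset.mem_Icc, Pi.le_def, Pi.le_def]
          constructor <;> intro i <;>
          · have h1 := natAbs_le_dist1 x y i
            have h2 : ((x i - y i).natAbs : ℤ) ≤ (m : ℤ) := by exact_mod_cast h1.trans hLm
            omega
        refine Set.mem_biUnion hyB ?_
        simp only [Set.mem_setOf_eq]
        have hsum0 : ∀ (Q : Finset (Site d)), Q ⊆ P y → ∑ z ∈ Q, ω z ≤ ∑ z ∈ P y, ω z :=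
          fun Q hQ => Finset.sum_le_sum_of_subset_of_nonneg hQ (fun z _ _ => hg z)
        have hb1 : aCost ω Set.univ x y ≤
            (dist1 x y : ℝ) * Real.log (2*(d:ℝ)) + ∑ z ∈ P y, ω z := by
          refine (aCost_le hd ω hg x y).trans ?_
          have := hsum0 _ (Finset.subset_union_left (s₁ := (pathTo x y).toFinset)
            (s₂ := (pathTo y x).toFinset))
          linarith
        have hb2 : aCost ω Set.univ y x ≤
            (dist1 x y : ℝ) * Real.log (2*(d:ℝ)) + ∑ z ∈ P y, ω z := by
          have h := aCost_le hd ω hg y x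
          rw [dist1_symm y x] at h
          refine h.trans ?_
          have := hsum0 _ (Finset.subset_union_right (s₁ := (pathTo x y).toFinset)
            (s₂ := (pathTo y x).toFinset))
          linarith
        have hmax : max (aCost ω Set.univ x y) (aCost ω Set.univ y x) ≤
            t * Real.log (2*(d:ℝ)) + ∑ z ∈ P y, ω z := by
          have hle : (dist1 x y : ℝ) * Real.log (2*(d:ℝ)) ≤ t * Real.log (2*(d:ℝ)) :=
            mul_le_mul_of_nonneg_right hLt.le hlog2d
          exact max_le (hb1.trans (by linarith)) (hb2.trans (by linarith))
        have h2' : C₅ * t ≤ max (aCost ω Set.univ x y) (aCost ω Set.univ y x) := by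
          calc C₅ * t = C₅ * η * N := by rw [ht]; ring
            _ ≤ _ := h2
        have hC5t : C₅ * t = s₀ + t * Real.log (2*(d:ℝ)) := by
          rw [hC5, hs₀]; ring
        linarith
      have hST : μ S ≤ μ (S ∩ G) + μ Gᶜ := by
        have : S ⊆ (S ∩ G) ∪ Gᶜ := by
          intro ω hω
          by_cases hg : ω ∈ G
          · exact Or.inl ⟨hω, hg⟩
          · exact Or.inr hg
        exact (measure_mono this).trans (measure_union_le _ _)
      set K : ℕ := 2*(d*m+1) with hK
      have hcard : ∀ y ∈ Ball, (P y).card ≤ K := by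
        intro y hy
        have hdY : dist1 x y ≤ d * m := by
          have : ∀ i, (x i - y i).natAbs ≤ m := by
            intro i
            rw [hBall, Finset.mem_Icc, Pi.le_def, Pi.le_def] at hy
            have h1 := hy.1 i
            have h2 := hy.2 i
            omega
          calc dist1 x y = ∑ i, (x i - y i).natAbs := rfl
            _ ≤ ∑ _i : Fin d, m := Finset.sum_le_sum fun i _ => this i
            _ = d * m := by simp [Finset.sum_const, Finset.card_univ, Nat.mul_comm]
        have hc1 : (pathTo x y).toFinset.card ≤ d*m + 1 := by
          calc (pathTo x y).toFinset.card ≤ (pathTo x y).length := (pathTo x y).toFinset_card_le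
            _ = dist1 x y + 1 := (pathTo_spec x y).2.1
            _ ≤ d*m + 1 := by omega
        have hc2 : (pathTo y x).toFinset.card ≤ d*m + 1 := by
          calc (pathTo y x).toFinset.card ≤ (pathTo y x).length := (pathTo y x).toFinset_card_le
            _ = dist1 y x + 1 := (pathTo_spec y x).2.1
            _ ≤ d*m + 1 := by rw [dist1_symm y x]; omega
        calc (P y).card ≤ (pathTo x y).toFinset.card + (pathTo y x).toFinset.card :=
              Finset.card_union_le _ _
          _ ≤ K := by omega
      have hEbound : ∀ y ∈ Ball, μ {ω : (Site d) → ℝ | s₀ ≤ ∑ z ∈ P y, ω z} ≤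
          ENNReal.ofReal (Real.exp (-γ * s₀) * M ^ K) := by
        intro y hy
        refine (chernoff μ hindep hident γ hγ hA1 (P y) s₀).trans ?_
        apply ENNReal.ofReal_le_ofReal
        rw [← hM]
        exact mul_le_mul_of_nonneg_left (pow_le_pow_right₀ hM1 (hcard y hy)) (Real.exp_pos _).le
      have hBallcard : Ball.card = (2*m+1)^d := by
        rw [hBall, Pi.card_Icc]
        have : ∀ i : Fin d, (Finset.Icc (x i - m) (x i + m)).card = 2*m+1 := by
          intro i
          rw [Int.card_Icc]
          omega
        rw [Finset.prod_congr rfl fun i _ => this i, Finset.prod_const, Finset.card_univ,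
          Fintype.card_fin]
      have hfinal : ((2*m+1)^d : ℝ) * (Real.exp (-γ * s₀) * M ^ K) ≤
          Real.exp (-1 * η * norm1 x) := by
        have h2m : (2*(m:ℝ)+1) ≤ 3*t := by
          have : (1:ℝ) ≤ (m:ℝ) := by exact_mod_cast hm1
          linarith
        have h3t : (0:ℝ) < 3*t := by linarith
        have hA : ((2*m+1)^d : ℝ) ≤ Real.exp (3*d*t) := by
          calc ((2*m+1)^d : ℝ) = (2*(m:ℝ)+1)^d := by push_cast; ring
            _ ≤ (3*t)^d := pow_le_pow_left₀ (by positivity) h2m d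
            _ = Real.exp ((d:ℝ) * Real.log (3*t)) := by
                rw [← Real.log_pow, Real.exp_log (by positivity)]
            _ ≤ Real.exp (3*(d:ℝ)*t) := by
                apply Real.exp_le_exp.mpr
                have hlog3t : Real.log (3*t) ≤ 3*t := Real.log_le_self h3t.le
                nlinarith [Nat.cast_nonneg (α := ℝ) d]
        have hC : (M:ℝ) ^ K ≤ Real.exp (4*d*t*Real.log M) := by
          have hKle : (K:ℝ) ≤ 4*d*t := by
            have hmd : (m:ℝ) ≤ t := hmt
            have h1d : (1:ℝ) ≤ (d:ℝ)*t := by nlinarith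
            push_cast [hK]
            nlinarith
          calc (M:ℝ) ^ K = Real.exp ((K:ℝ) * Real.log M) := by
                rw [← Real.exp_log hM0, ← Real.exp_nat_mul, Real.log_exp]
            _ ≤ Real.exp (4*d*t*Real.log M) := by
                apply Real.exp_le_exp.mpr
                exact mul_le_mul_of_nonneg_right hKle hlogM
        have hγs : γ * s₀ = B * t := by
          rw [hs₀]
          field_simp
        calc ((2*m+1)^d : ℝ) * (Real.exp (-γ * s₀) * M ^ K)
            ≤ Real.exp (3*d*t) * (Real.exp (-γ * s₀) * Real.exp (4*d*t*Real.log M)) := by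
              have hMK : (0:ℝ) ≤ M ^ K := pow_nonneg hM0.le K
              exact mul_le_mul hA (mul_le_mul_of_nonneg_left hC (Real.exp_pos _).le)
                (mul_nonneg (Real.exp_pos _).le hMK) (Real.exp_pos _).le
          _ = Real.exp (3*d*t + (-γ * s₀) + 4*d*t*Real.log M) := by
              rw [← Real.exp_add, ← Real.exp_add]
              ring_nf
          _ = Real.exp (-1 * η * norm1 x) := by
              congr 1
              have h1 : -1 * η * norm1 x = -t := by rw [ht, hNdef]; ring
              have h2 : -γ * s₀ = -(B*t) := by rw [← hγs]; ring
              rw [h1, h2, hB]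
              ring
        done
      calc μ S ≤ μ (S ∩ G) + μ Gᶜ := hST
        _ = μ (S ∩ G) := by rw [hGc, add_zero]
        _ ≤ μ (⋃ y ∈ Ball, {ω : (Site d) → ℝ | s₀ ≤ ∑ z ∈ P y, ω z}) := measure_mono hsub
        _ ≤ ∑ y ∈ Ball, μ {ω : (Site d) → ℝ | s₀ ≤ ∑ z ∈ P y, ω z} :=
            measure_biUnion_finset_le _ _
        _ ≤ ∑ _y ∈ Ball, ENNReal.ofReal (Real.exp (-γ * s₀) * M ^ K) :=
            Finset.sum_le_sum hEbound
        _ = (Ball.card : ℝ≥0∞) * ENNReal.ofReal (Real.exp (-γ * s₀) * M ^ K) := by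
            rw [Finset.sum_const, nsmul_eq_mul]
        _ = ENNReal.ofReal (((2*m+1)^d : ℕ) * (Real.exp (-γ * s₀) * M ^ K)) := by
            rw [hBallcard, ← ENNReal.ofReal_natCast, ← ENNReal.ofReal_mul (Nat.cast_nonneg _)]
        _ ≤ ENNReal.ofReal (Real.exp (-1 * η * norm1 x)) := by
            apply ENNReal.ofReal_le_ofReal
            calc (((2*m+1)^d : ℕ) : ℝ) * (Real.exp (-γ * s₀) * M ^ K)
                = ((2*m+1)^d : ℝ) * (Real.exp (-γ * s₀) * M ^ K) := by push_cast; ring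
              _ ≤ Real.exp (-1 * η * norm1 x) := hfinal


end RWRP
end

section
/- Fix κ > 0 with ℙ(ω(0) ≥ κ) > 0. If M ∈ ℕ is large enough then there is a constant 0 < C < ∞ such that for every l ≥ 1, the ℙ-probability that some ℓ¹-lattice animal Γ ⊆ Z^d with 0 ∈ Γ and #Γ = l satisfies ∑_{q∈Γ} 1{B(q) is occupied} < l/2 is at most e^{−C l}. -/
open MeasureTheory ProbabilityTheory Filter Set
open scoped ENNReal NNReal BigOperators Topology

namespace RWRP

variable {d : ℕ}

/-- The box `B(q) = Mq + [0,M)^d` is occupied for the potential `ω` : some site of the box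
has potential at least `κ`. -/
def boxOccupied (κ : ℝ) (M : ℕ) (ω : Site d → ℝ) (q : Site d) : Prop :=
  ∃ z : Site d, (∀ i, (M : ℤ) * q i ≤ z i ∧ z i < (M : ℤ) * q i + (M : ℤ)) ∧ κ ≤ ω z

/-- An ℓ¹-lattice animal: a nonempty finite subset of `ℤ^d` which is connected for the
adjacency relation `‖v₁ - v₂‖₁ = 1`. -/
def IsLatticeAnimal (Γ : Finset (Site d)) : Prop :=
  Γ.Nonempty ∧ ∀ u ∈ Γ, ∀ v ∈ Γ, ∃ r : List (Site d), IsNNPath r ∧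
    r.head? = some u ∧ r.getLast? = some v ∧ ∀ z ∈ r, z ∈ Γ

open scoped Classical

lemma dist1_comm' (u v : Site d) : dist1 u v = dist1 v u :=
  Finset.sum_congr rfl fun i _ => by omega

/-- Step directions, including the zero step (index `2*d`). -/
def dirs (i : Fin (2*d+1)) : Site d := fun j =>
  if (i : ℕ) = (j : ℕ) then 1 else if (i : ℕ) = d + (j : ℕ) then -1 else 0

lemma dirs_last : dirs (d := d) ⟨2*d, by omega⟩ = 0 := by
  funext j
  have hj := j.isLt
  simp only [dirs]
  rw [if_neg (by omega), if_neg (by omega)]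
  rfl

lemma exists_dir (a b : Site d) (h : dist1 a b ≤ 1) :
    ∃ i : Fin (2*d+1), b - a = dirs i := by
  unfold dist1 at h
  rcases Nat.lt_or_ge (∑ i, (a i - b i).natAbs) 1 with h0 | h1
  · have hz : ∀ j, (a j - b j).natAbs = 0 := fun j =>
      Finset.sum_eq_zero_iff.mp (Nat.lt_one_iff.mp h0) j (Finset.mem_univ j)
    refine ⟨⟨2*d, by omega⟩, ?_⟩
    funext j
    have hj := j.isLt
    have hab : a j - b j = 0 := Int.natAbs_eq_zero.mp (hz j)
    simp only [dirs, Pi.sub_apply]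
    rw [if_neg (by omega), if_neg (by omega)]
    omega
  · have hsum : ∑ i, (a i - b i).natAbs = 1 := le_antisymm h h1
    have hex : ∃ j0, (a j0 - b j0).natAbs ≠ 0 := by
      by_contra hc
      push_neg at hc
      rw [Finset.sum_eq_zero (fun j _ => hc j)] at hsum
      omega
    obtain ⟨j0, hj0⟩ := hex
    have h1j : (a j0 - b j0).natAbs = 1 := by
      have hle : (a j0 - b j0).natAbs ≤ 1 :=
        hsum ▸ Finset.single_le_sum (f := fun i => (a i - b i).natAbs)
          (fun i _ => Nat.zero_le _) (Finset.mem_univ j0)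
      omega
    have herase : ∑ j ∈ Finset.univ.erase j0, (a j - b j).natAbs = 0 := by
      have hadd : (∑ j ∈ Finset.univ.erase j0, (a j - b j).natAbs) + (a j0 - b j0).natAbs
          = ∑ i, (a i - b i).natAbs :=
        Finset.sum_erase_add _ _ (Finset.mem_univ j0)
      omega
    have hothers : ∀ j, j ≠ j0 → a j = b j := by
      intro j hj
      have h0 := Finset.sum_eq_zero_iff.mp herase j
        (Finset.mem_erase.mpr ⟨hj, Finset.mem_univ j⟩)
      have := Int.natAbs_eq_zero.mp h0
      omega
    rcases Int.natAbs_eq_iff.mp h1j with hpm | hpm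
    · refine ⟨⟨d + (j0 : ℕ), by omega⟩, ?_⟩
      funext j
      have hj := j.isLt
      have hj0lt := j0.isLt
      simp only [dirs, Pi.sub_apply]
      by_cases hjj : j = j0
      · subst hjj
        rw [if_neg (by omega), if_pos rfl]
        omega
      · have hne : (j0 : ℕ) ≠ (j : ℕ) := fun hc => hjj (Fin.ext hc.symm)
        rw [if_neg (by omega), if_neg (by omega)]
        have := hothers j hjj
        omega
    · refine ⟨⟨(j0 : ℕ), by omega⟩, ?_⟩
      funext j
      have hj := j.isLt
      have hj0lt := j0.isLt
      simp only [dirs, Pi.sub_apply]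
      by_cases hjj : j = j0
      · subst hjj
        rw [if_pos rfl]
        omega
      · have hne : (j0 : ℕ) ≠ (j : ℕ) := fun hc => hjj (Fin.ext hc.symm)
        rw [if_neg hne, if_neg (by omega)]
        have := hothers j hjj
        omega

lemma exists_exit {X : Type*} (P : X → Prop) (R : X → X → Prop) :
    ∀ (r : List X) (a b : X), r.Chain' R → r.head? = some a → r.getLast? = some b →
      P a → ¬ P b → ∃ t v, P t ∧ ¬ P v ∧ v ∈ r ∧ R t v := by
  intro r
  induction r with
  | nil => intro a b _ h1 _ _ _; simp at h1
  | cons x s ih =>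
    intro a b hch h1 h2 hPa hPb
    have hax : x = a := by simpa using h1
    cases s with
    | nil =>
      have hxb : x = b := by simpa using h2
      exact absurd (show P b by rw [← hxb, hax]; exact hPa) hPb
    | cons y s' =>
      have hch' := List.isChain_cons_cons.mp hch
      by_cases hy : P y
      · obtain ⟨t, v, h₁, h₂, h₃, h₄⟩ := ih y b hch'.2 rfl
          (by simpa [List.getLast?_cons_cons] using h2) hy hPb
        exact ⟨t, v, h₁, h₂, List.mem_cons_of_mem _ h₃, h₄⟩
      · exact ⟨x, y, hax ▸ hPa, hy, by simp, hch'.1⟩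

lemma grow (Γ : Finset (Site d))
    (hconn : ∀ u ∈ Γ, ∀ v ∈ Γ, ∃ r : List (Site d), IsNNPath r ∧ r.head? = some u ∧
      r.getLast? = some v ∧ ∀ z ∈ r, z ∈ Γ)
    (h0 : (0 : Site d) ∈ Γ) :
    ∀ n (Δ : Finset (Site d)), Δ ⊆ Γ → Γ.card - Δ.card ≤ n →
      (∃ w : List (Site d), w.head? = some 0 ∧ w.Chain' (fun a b => dist1 a b ≤ 1) ∧
        w.toFinset = Δ ∧ w.length ≤ 2 * Δ.card) →
      ∃ w : List (Site d), w.head? = some 0 ∧ w.Chain' (fun a b => dist1 a b ≤ 1) ∧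
        w.toFinset = Γ ∧ w.length ≤ 2 * Γ.card := by
  intro n
  induction n with
  | zero =>
    intro Δ hsub hcard hw
    have hle : Γ.card ≤ Δ.card := by omega
    have : Δ = Γ := Finset.eq_of_subset_of_card_le hsub hle
    exact this ▸ hw
  | succ n ih =>
    intro Δ hsub hcard hw
    by_cases heq : Δ = Γ
    · exact heq ▸ hw
    · obtain ⟨v', hv'Γ, hv'Δ⟩ : ∃ v' ∈ Γ, v' ∉ Δ := by
        by_contra hc
        push_neg at hc
        exact heq (Finset.Subset.antisymm hsub fun x hx => hc x hx)
      obtain ⟨w, hhead, hchain, hcover, hlen⟩ := hw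
      have h0Δ : (0 : Site d) ∈ Δ := by
        rw [← hcover, List.mem_toFinset]
        cases w with
        | nil => simp at hhead
        | cons c w' =>
          have : c = 0 := by simpa using hhead
          simp [this]
      obtain ⟨r, hrNN, hrh, hrl, hrΓ⟩ := hconn 0 h0 v' hv'Γ
      obtain ⟨t, v, htΔ, hvΔ, hvr, htv⟩ :=
        exists_exit (· ∈ Δ) (fun a b => dist1 a b = 1) r 0 v' hrNN hrh hrl h0Δ hv'Δ
      have hvΓ : v ∈ Γ := hrΓ v hvr
      have htw : t ∈ w := by rw [← List.mem_toFinset, hcover]; exact htΔ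
      obtain ⟨w1, w2, hwsplit⟩ := List.append_of_mem htw
      subst hwsplit
      refine ih (insert v Δ) (Finset.insert_subset hvΓ hsub) ?_ ?_
      · rw [Finset.card_insert_of_notMem hvΔ]
        omega
      · refine ⟨w1 ++ t :: v :: t :: w2, ?_, ?_, ?_, ?_⟩
        · cases w1 with
          | nil => simpa using hhead
          | cons c w1' => simpa using hhead
        · have hsp := List.isChain_split.mp hchain
          refine List.isChain_split.mpr ⟨hsp.1, ?_⟩
          refine List.isChain_cons_cons.mpr ⟨le_of_eq htv, List.isChain_cons_cons.mpr ⟨?_, hsp.2⟩⟩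
          rw [dist1_comm']
          exact le_of_eq htv
        · ext x
          simp only [← hcover, List.mem_toFinset, List.mem_append, List.mem_cons,
            Finset.mem_insert]
          tauto
        · have h1 : (w1 ++ t :: v :: t :: w2).length = (w1 ++ t :: w2).length + 2 := by
            simp; omega
          have h2 : (insert v Δ).card = Δ.card + 1 := Finset.card_insert_of_notMem hvΔ
          omega

lemma exists_cover_walk (Γ : Finset (Site d))
    (hconn : ∀ u ∈ Γ, ∀ v ∈ Γ, ∃ r : List (Site d), IsNNPath r ∧ r.head? = some u ∧
      r.getLast? = some v ∧ ∀ z ∈ r, z ∈ Γ)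
    (h0 : (0 : Site d) ∈ Γ) :
    ∃ w : List (Site d), w.head? = some 0 ∧ w.Chain' (fun a b => dist1 a b ≤ 1) ∧
      w.toFinset = Γ ∧ w.length ≤ 2 * Γ.card :=
  grow Γ hconn h0 Γ.card {0} (Finset.singleton_subset_iff.mpr h0) (by omega)
    ⟨[0], rfl, List.isChain_singleton _, by simp, by simp⟩

/-- Decoding of a step sequence into the set of visited sites. -/
def decode (d l : ℕ) (g : Fin (2*l) → Fin (2*d+1)) : Finset (Site d) :=
  (Finset.range (2*l+1)).image fun n => ((List.ofFn fun j => dirs (g j)).take n).sum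

lemma exists_decode (l : ℕ) (Γ : Finset (Site d))
    (hconn : ∀ u ∈ Γ, ∀ v ∈ Γ, ∃ r : List (Site d), IsNNPath r ∧ r.head? = some u ∧
      r.getLast? = some v ∧ ∀ z ∈ r, z ∈ Γ)
    (h0 : (0 : Site d) ∈ Γ) (hcard : Γ.card = l) :
    ∃ g : Fin (2*l) → Fin (2*d+1), decode d l g = Γ := by
  obtain ⟨w, hhead, hchain, hcover, hlen⟩ := exists_cover_walk Γ hconn h0
  have hw0 : w ≠ [] := by intro h; rw [h] at hhead; simp at hhead
  have hlpos : 1 ≤ w.length := List.length_pos_iff.mpr hw0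
  have hlen' : w.length ≤ 2 * l := by rw [hcard] at hlen; exact hlen
  have hstep : ∀ n (hn : n + 1 < w.length),
      dist1 (w[n]'(by omega)) (w[n+1]'(by omega)) ≤ 1 := by
    intro n hn
    have := List.isChain_iff_getElem.mp hchain n (by omega)
    simpa [List.get_eq_getElem] using this
  set g : Fin (2*l) → Fin (2*d+1) := fun j =>
    if h : (j : ℕ) + 1 < w.length then
      (exists_dir (w[(j : ℕ)]'(by omega)) (w[(j : ℕ)+1]'(by omega)) (hstep _ h)).choose
    else ⟨2*d, by omega⟩ with hg
  refine ⟨g, ?_⟩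
  set L : List (Site d) := List.ofFn fun j => dirs (g j) with hL
  have hLlen : L.length = 2*l := by simp [hL]
  have key : ∀ n, n ≤ 2*l → (L.take n).sum = w.getD (min n (w.length - 1)) 0 := by
    intro n
    induction n with
    | zero =>
      intro _
      have h00 : w[0]? = some 0 := by rw [← List.head?_eq_getElem?]; exact hhead
      rw [List.getElem?_eq_getElem (by omega)] at h00
      have hw00 : w[0] = 0 := by simpa using h00
      rw [List.take_zero, List.sum_nil, Nat.zero_min,
        List.getD_eq_getElem _ _ (by omega), hw00]
    | succ n ihn =>
      intro hn1
      have hnL : n < L.length := by omega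
      rw [List.take_succ, List.getElem?_eq_getElem hnL, Option.toList_some, List.sum_append,
        List.sum_cons, List.sum_nil, add_zero, ihn (by omega)]
      have hLn : L[n]'hnL = dirs (g ⟨n, by omega⟩) := by
        simp [hL, List.getElem_ofFn]
      rw [hLn]
      by_cases h : n + 1 < w.length
      · have hgn : g ⟨n, by omega⟩ =
            (exists_dir (w[n]'(by omega)) (w[n+1]'(by omega)) (hstep n h)).choose := by
          rw [hg]
          simp only []
          rw [dif_pos h]
        rw [hgn]
        have hspec := (exists_dir (w[n]'(by omega)) (w[n+1]'(by omega)) (hstep n h)).choose_spec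
        rw [← hspec, show min n (w.length - 1) = n by omega,
          show min (n+1) (w.length - 1) = n+1 by omega,
          List.getD_eq_getElem _ _ (by omega), List.getD_eq_getElem _ _ (by omega)]
        abel
      · have hgn : g ⟨n, by omega⟩ = ⟨2*d, by omega⟩ := by
          rw [hg]
          simp only []
          rw [dif_neg h]
        rw [hgn, dirs_last, add_zero, show min n (w.length - 1) = w.length - 1 by omega,
          show min (n+1) (w.length - 1) = w.length - 1 by omega]
  rw [← hcover]
  ext x
  simp only [decode, Finset.mem_image, Finset.mem_range, List.mem_toFinset, ← hL]
  constructor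
  · rintro ⟨n, hn, rfl⟩
    rw [key n (by omega)]
    have hmin : min n (w.length - 1) < w.length := by omega
    rw [List.getD_eq_getElem _ _ hmin]
    exact List.getElem_mem _
  · intro hx
    obtain ⟨m, hm, rfl⟩ := List.mem_iff_getElem.mp hx
    exact ⟨m, by omega, by
      rw [key m (by omega), show min m (w.length - 1) = m by omega,
        List.getD_eq_getElem _ _ (by omega)]⟩


def siteOf (M : ℕ) (q : Site d) (j : ℕ) : Site d :=
  fun i => (M : ℤ) * q i + if (i : ℕ) = 0 then (j : ℤ) else 0



/-- **Estimate (2.5)/(eq:bin_conc).**  Fix `κ > 0` with `ℙ(ω(0) ≥ κ) > 0`.  If the box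
size `M` is large enough, then there is `C > 0` such that for every `l ≥ 1` the
probability that some ℓ¹-lattice animal `Γ ∋ 0` with `#Γ = l` has fewer than `l/2`
occupied boxes is at most `e^{-C l}`. -/
theorem lattice_animal_occupied_boxes
    (d : ℕ) (hd : 2 ≤ d) (μ : Measure ((Site d) → ℝ)) [IsProbabilityMeasure μ]
    (hindep : iIndepFun (fun z : Site d => fun ω => ω z) μ)
    (hident : ∀ z : Site d, IdentDistrib (fun ω => ω z) (fun ω => ω 0) μ μ)
    (hpos : ∀ᵐ ω ∂μ, ∀ z : Site d, 0 ≤ ω z)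
    (hnontriv : μ {ω | ω 0 = 0} < 1)
    (κ : ℝ) (hκ : 0 < κ) (hκpos : 0 < μ {ω | κ ≤ ω 0}) :
    ∃ M₀ : ℕ, ∀ M : ℕ, M₀ ≤ M →
      ∃ C : ℝ, 0 < C ∧ ∀ l : ℕ, 1 ≤ l →
        μ {ω | ∃ Γ : Finset (Site d), (0 : Site d) ∈ Γ ∧ IsLatticeAnimal Γ ∧ Γ.card = l ∧
              ((Γ.filter fun q => boxOccupied κ M ω q).card : ℝ) < (l : ℝ) / 2} ≤
          ENNReal.ofReal (Real.exp (-C * l)) := by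
  classical
  -- basic events and independence
  have hmeasIci : MeasurableSet {ω : (Site d) → ℝ | κ ≤ ω 0} :=
    (measurable_pi_apply 0) measurableSet_Ici
  set q1 : ℝ≥0∞ := μ {ω | ω 0 < κ} with hq1
  have hq1z : ∀ z : Site d, μ {ω | ω z < κ} = q1 := by
    intro z
    have := (hident z).measure_mem_eq (s := Set.Iio κ) measurableSet_Iio
    simpa [Set.preimage] using this
  have hprod : ∀ T : Finset (Site d),
      μ (⋂ z ∈ T, {ω : (Site d) → ℝ | ω z < κ}) = q1 ^ T.card := by
    intro T
    rw [hindep.meas_biInter (S := T) (s := fun z => {ω : (Site d) → ℝ | ω z < κ})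
      (fun z _ => MeasurableSpace.measurableSet_comap.mpr ⟨Set.Iio κ, measurableSet_Iio, rfl⟩)]
    rw [Finset.prod_congr rfl fun z _ => hq1z z, Finset.prod_const]
  have hq1lt : q1 < 1 := by
    have hcompl : {ω : (Site d) → ℝ | ω 0 < κ} = {ω : (Site d) → ℝ | κ ≤ ω 0}ᶜ := by
      ext ω; simp [not_le]
    rw [hq1, hcompl, measure_compl hmeasIci (measure_ne_top μ _), measure_univ]
    exact ENNReal.sub_lt_self ENNReal.one_ne_top one_ne_zero (ne_of_gt hκpos)
  -- constants
  set Knat : ℕ := 8 * (2*d+1)^2 with hKnat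
  have hKnat1 : 1 ≤ Knat := by
    have : 0 < Knat := by positivity
    omega
  set β : ℝ := Real.exp (-1) / (Knat : ℝ) with hβ
  have hKpos : (0:ℝ) < (Knat : ℝ) := by positivity
  have hβpos : 0 < β := div_pos (Real.exp_pos _) hKpos
  have hβle : β ≤ 1 := by
    have h1 : Real.exp (-1) ≤ 1 := by
      have := Real.exp_lt_exp.mpr (show (-1:ℝ) < 0 by norm_num)
      rw [Real.exp_zero] at this
      linarith
    have h2 : (1:ℝ) ≤ (Knat : ℝ) := by exact_mod_cast hKnat1
    rw [hβ, div_le_one hKpos]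
    linarith
  -- choose n₀
  obtain ⟨n₀, hn₀⟩ : ∃ n₀ : ℕ, q1 ^ n₀ ≤ ENNReal.ofReal (β^2) := by
    rcases eq_or_ne q1 0 with h0 | h0
    · exact ⟨1, by simp [h0]⟩
    · have htop : q1 ≠ ⊤ := (hq1lt.trans_le le_top).ne
      have hr1 : q1.toReal < 1 := by
        have := (ENNReal.toReal_lt_toReal htop ENNReal.one_ne_top).mpr hq1lt
        simpa using this
      have hr0 : (0:ℝ) ≤ q1.toReal := ENNReal.toReal_nonneg
      have htt := tendsto_pow_atTop_nhds_zero_of_lt_one hr0 hr1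
      have hb2 : (0:ℝ) < β^2 := by positivity
      obtain ⟨n₀, hn₀⟩ := (htt.eventually (gt_mem_nhds hb2)).exists
      refine ⟨n₀, ?_⟩
      have : q1 ^ n₀ = ENNReal.ofReal (q1.toReal ^ n₀) := by
        rw [ENNReal.ofReal_pow hr0, ENNReal.ofReal_toReal htop]
      rw [this]
      exact ENNReal.ofReal_le_ofReal hn₀.le
  refine ⟨max n₀ 1, ?_⟩
  intro M hM
  have hM1 : 1 ≤ M := le_trans (le_max_right _ _) hM
  have hδM : q1 ^ M ≤ ENNReal.ofReal (β^2) :=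
    le_trans (pow_le_pow_right_of_le_one' hq1lt.le (le_trans (le_max_left _ _) hM)) hn₀
  refine ⟨1, one_pos, ?_⟩
  intro l hl
  set k : ℕ := (l+1)/2 with hk
  -- injectivity of siteOf on each S ×ˢ range M
  have hinj : ∀ S : Finset (Site d),
      Set.InjOn (fun p : Site d × ℕ => siteOf M p.1 p.2)
        (↑(S ×ˢ Finset.range M) : Set (Site d × ℕ)) := by
    intro S p hp p' hp' he
    have hj : p.2 < M :=
      Finset.mem_range.mp (Finset.mem_product.mp (Finset.mem_coe.mp hp)).2
    have hj' : p'.2 < M :=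
      Finset.mem_range.mp (Finset.mem_product.mp (Finset.mem_coe.mp hp')).2
    have hcoord : ∀ i : Fin d,
        (M:ℤ) * p.1 i + (if (i:ℕ) = 0 then (p.2:ℤ) else 0)
          = (M:ℤ) * p'.1 i + (if (i:ℕ) = 0 then (p'.2:ℤ) else 0) := fun i => congrFun he i
    have hMZ : (1:ℤ) ≤ (M:ℤ) := by exact_mod_cast hM1
    have h00 := hcoord ⟨0, by omega⟩
    rw [if_pos rfl, if_pos rfl] at h00
    have hjZ : ((p.2:ℤ)) < M := by exact_mod_cast hj
    have hj'Z : ((p'.2:ℤ)) < M := by exact_mod_cast hj'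
    have hjnn : (0:ℤ) ≤ (p.2:ℤ) := Int.natCast_nonneg _
    have hj'nn : (0:ℤ) ≤ (p'.2:ℤ) := Int.natCast_nonneg _
    set a : ℤ := p.1 ⟨0, by omega⟩
    set b : ℤ := p'.1 ⟨0, by omega⟩
    have hab : a = b := by
      rcases lt_trichotomy a b with h | h | h
      · exfalso
        have hMb : (M:ℤ) * (a+1) ≤ (M:ℤ) * b :=
          mul_le_mul_of_nonneg_left (by linarith) (by linarith)
        nlinarith
      · exact h
      · exfalso
        have hMb : (M:ℤ) * (b+1) ≤ (M:ℤ) * a :=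
          mul_le_mul_of_nonneg_left (by linarith) (by linarith)
        nlinarith
    have hjj : p.2 = p'.2 := by
      have : (p.2:ℤ) = (p'.2:ℤ) := by rw [hab] at h00; linarith
      exact_mod_cast this
    have hqq : p.1 = p'.1 := by
      funext i
      by_cases hi : (i:ℕ) = 0
      · have : i = ⟨0, by omega⟩ := Fin.ext hi
        rw [this]; exact hab
      · have := hcoord i
        rw [if_neg hi, if_neg hi] at this
        have hMne : (M:ℤ) ≠ 0 := by omega
        exact mul_left_cancel₀ hMne (by linarith)
    exact Prod.ext hqq hjj
  -- the sites associated to a finite set of boxes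
  set TS : Finset (Site d) → Finset (Site d) := fun S =>
    (S ×ˢ Finset.range M).image fun p : Site d × ℕ => siteOf M p.1 p.2 with hTS
  have hcardT : ∀ S : Finset (Site d), (TS S).card = S.card * M := by
    intro S
    rw [hTS]
    rw [Finset.card_image_of_injOn (hinj S), Finset.card_product, Finset.card_range]
  -- event inclusion
  have hsub : {ω : (Site d) → ℝ | ∃ Γ : Finset (Site d), (0 : Site d) ∈ Γ ∧
        IsLatticeAnimal Γ ∧ Γ.card = l ∧
        ((Γ.filter fun q => boxOccupied κ M ω q).card : ℝ) < (l : ℝ) / 2} ⊆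
      ⋃ g : Fin (2*l) → Fin (2*d+1), ⋃ S ∈ (decode d l g).powersetCard k,
        ⋂ z ∈ TS S, {ω : (Site d) → ℝ | ω z < κ} := by
    rintro ω ⟨Γ, h0Γ, hanim, hcardΓ, hocc⟩
    obtain ⟨g, hg⟩ := exists_decode l Γ hanim.2 h0Γ hcardΓ
    have hocc' : 2 * (Γ.filter fun q => boxOccupied κ M ω q).card + 1 ≤ l := by
      have h2 : ((Γ.filter fun q => boxOccupied κ M ω q).card : ℝ) * 2 < l := by linarith
      have h3 : ((Γ.filter fun q => boxOccupied κ M ω q).card * 2 : ℕ) < l := by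
        exact_mod_cast h2
      omega
    have hUcard : k ≤ (Γ.filter fun q => ¬ boxOccupied κ M ω q).card := by
      have hsplit := Finset.card_filter_add_card_filter_not
        (s := Γ) (p := fun q => boxOccupied κ M ω q)
      omega
    obtain ⟨S, hSU, hScard⟩ := Finset.exists_subset_card_eq hUcard
    refine Set.mem_iUnion.mpr ⟨g, Set.mem_iUnion₂.mpr ⟨S, ?_, ?_⟩⟩
    · rw [Finset.mem_powersetCard, hg]
      exact ⟨hSU.trans (Finset.filter_subset _ _), hScard⟩
    · refine Set.mem_iInter₂.mpr ?_
      intro z hz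
      rw [hTS] at hz
      obtain ⟨p, hp, rfl⟩ := Finset.mem_image.mp hz
      obtain ⟨hpS, hpM⟩ := Finset.mem_product.mp hp
      have hq : ¬ boxOccupied κ M ω p.1 := (Finset.mem_filter.mp (hSU hpS)).2
      have hjM : p.2 < M := Finset.mem_range.mp hpM
      simp only [Set.mem_setOf_eq]
      by_contra hcon
      push_neg at hcon
      refine hq ⟨siteOf M p.1 p.2, fun i => ?_, hcon⟩
      have hjZ : ((p.2:ℤ)) < M := by exact_mod_cast hjM
      have hjnn : (0:ℤ) ≤ (p.2:ℤ) := Int.natCast_nonneg _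
      have hMZ : (1:ℤ) ≤ (M:ℤ) := by exact_mod_cast hM1
      simp only [siteOf]
      constructor
      · split <;> linarith
      · split <;> linarith
  -- single-term bound
  have hterm : ∀ S : Finset (Site d), S.card = k →
      μ (⋂ z ∈ TS S, {ω : (Site d) → ℝ | ω z < κ}) ≤ ENNReal.ofReal (β^2) ^ k := by
    intro S hS
    rw [hprod (TS S), hcardT S, hS, mul_comm, pow_mul]
    exact pow_le_pow_left' hδM k
  -- put everything together
  have hk2 : l ≤ 2 * k := by omega
  have hchain : μ {ω : (Site d) → ℝ | ∃ Γ : Finset (Site d), (0 : Site d) ∈ Γ ∧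
        IsLatticeAnimal Γ ∧ Γ.card = l ∧
        ((Γ.filter fun q => boxOccupied κ M ω q).card : ℝ) < (l : ℝ) / 2} ≤
      ((((2*d+1)^(2*l) * 2^(2*l+1) : ℕ)) : ℝ≥0∞) * ENNReal.ofReal (β^2) ^ k := by
    calc μ _ ≤ μ (⋃ g : Fin (2*l) → Fin (2*d+1), ⋃ S ∈ (decode d l g).powersetCard k,
            ⋂ z ∈ TS S, {ω : (Site d) → ℝ | ω z < κ}) := measure_mono hsub
      _ ≤ ∑' g : Fin (2*l) → Fin (2*d+1), μ (⋃ S ∈ (decode d l g).powersetCard k,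
            ⋂ z ∈ TS S, {ω : (Site d) → ℝ | ω z < κ}) := measure_iUnion_le _
      _ = ∑ g : Fin (2*l) → Fin (2*d+1), μ (⋃ S ∈ (decode d l g).powersetCard k,
            ⋂ z ∈ TS S, {ω : (Site d) → ℝ | ω z < κ}) := tsum_fintype _
      _ ≤ ∑ g : Fin (2*l) → Fin (2*d+1), ∑ S ∈ (decode d l g).powersetCard k,
            μ (⋂ z ∈ TS S, {ω : (Site d) → ℝ | ω z < κ}) :=
          Finset.sum_le_sum fun g _ => measure_biUnion_finset_le _ _
      _ ≤ ∑ g : Fin (2*l) → Fin (2*d+1), ∑ S ∈ (decode d l g).powersetCard k,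
            ENNReal.ofReal (β^2) ^ k := by
          refine Finset.sum_le_sum fun g _ => Finset.sum_le_sum fun S hS => ?_
          exact hterm S (Finset.mem_powersetCard.mp hS).2
      _ = ∑ g : Fin (2*l) → Fin (2*d+1),
            (((decode d l g).powersetCard k).card : ℝ≥0∞) * ENNReal.ofReal (β^2) ^ k := by
          simp [Finset.sum_const, nsmul_eq_mul]
      _ ≤ ∑ _g : Fin (2*l) → Fin (2*d+1), ((2^(2*l+1) : ℕ) : ℝ≥0∞) * ENNReal.ofReal (β^2) ^ k := by
          refine Finset.sum_le_sum fun g _ => ?_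
          refine mul_le_mul_left ?_ _
          have hsubp : (decode d l g).powersetCard k ⊆ (decode d l g).powerset := by
            intro S hS
            exact Finset.mem_powerset.mpr (Finset.mem_powersetCard.mp hS).1
          have h1 : ((decode d l g).powersetCard k).card ≤ 2 ^ (decode d l g).card := by
            rw [← Finset.card_powerset]
            exact Finset.card_le_card hsubp
          have h2 : (decode d l g).card ≤ 2*l+1 := by
            refine le_trans (Finset.card_image_le) ?_
            simp
          have : ((decode d l g).powersetCard k).card ≤ 2^(2*l+1) :=
            le_trans h1 (Nat.pow_le_pow_right (by norm_num) h2)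
          exact_mod_cast this
      _ = (((2*d+1)^(2*l) : ℕ) : ℝ≥0∞) * (((2^(2*l+1) : ℕ) : ℝ≥0∞) * ENNReal.ofReal (β^2) ^ k) := by
          rw [Finset.sum_const, Finset.card_univ, Fintype.card_fun, Fintype.card_fin,
            Fintype.card_fin, nsmul_eq_mul]
      _ = ((((2*d+1)^(2*l) * 2^(2*l+1) : ℕ)) : ℝ≥0∞) * ENNReal.ofReal (β^2) ^ k := by
          push_cast
          ring
  refine le_trans hchain ?_
  -- final numeric comparison
  have hofreal : ENNReal.ofReal (β^2) ^ k = ENNReal.ofReal (β^(2*k)) := by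
    rw [← ENNReal.ofReal_pow (by positivity), ← pow_mul]
  rw [hofreal, ← ENNReal.ofReal_natCast, ← ENNReal.ofReal_mul (by positivity)]
  refine ENNReal.ofReal_le_ofReal ?_
  have hNle : ((2*d+1)^(2*l) * 2^(2*l+1) : ℕ) ≤ Knat ^ l := by
    have h8 : (2:ℕ)^(2*l+1) ≤ 8^l := by
      have h3 : (8:ℕ)^l = 2^(3*l) := by
        rw [show (8:ℕ) = 2^3 by norm_num, ← pow_mul]
      rw [h3]
      exact Nat.pow_le_pow_right (by norm_num) (by omega)
    have h1 : ((2*d+1):ℕ)^(2*l) = ((2*d+1)^2)^l := by rw [pow_mul]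
    have h2 : Knat ^ l = 8^l * ((2*d+1)^2)^l := by rw [hKnat, mul_pow]
    rw [h1, h2]
    calc ((2*d+1)^2)^l * 2^(2*l+1) ≤ ((2*d+1)^2)^l * 8^l := Nat.mul_le_mul_left _ h8
      _ = 8^l * ((2*d+1)^2)^l := Nat.mul_comm _ _
  have hβ2k : β^(2*k) ≤ β^l := pow_le_pow_of_le_one hβpos.le hβle hk2
  have hKβ : (Knat:ℝ) * β = Real.exp (-1) := by
    rw [hβ]
    field_simp
  calc (((2*d+1)^(2*l) * 2^(2*l+1) : ℕ) : ℝ) * β^(2*k)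
      ≤ ((Knat:ℝ))^l * β^l := by
        have hcast : (((2*d+1)^(2*l) * 2^(2*l+1) : ℕ) : ℝ) ≤ ((Knat:ℝ))^l := by
          rw [show ((Knat:ℝ))^l = ((Knat^l : ℕ) : ℝ) by push_cast; ring]
          exact_mod_cast hNle
        exact mul_le_mul hcast hβ2k (by positivity) (by positivity)
    _ = ((Knat:ℝ) * β)^l := (mul_pow _ _ _).symm
    _ = Real.exp (-1) ^ l := by rw [hKβ]
    _ = Real.exp (-1 * l) := by
        rw [← Real.exp_nat_mul]
        ring_nf


end RWRP
end
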